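/- If p ∈ C⁺(0,α) and q ∈ C⁺(p,β) (with α,β ≥ 0), then q ∈ C⁺(0,γ) for γ = max{α, β, (ε₂/2)√((αβ+2β)C)}; the analogous statement holds for negative cones. -/
import Mathlib


open Matrix

/-- `⟨Bx,ξ⟩ ∈ ℝ^{m₂}`. -/
noncomputable def bvec {m₁ m₂ : ℕ} (B : Fin m₂ → Matrix (Fin m₁) (Fin m₁) ℝ)
    (x ξ : Fin m₁ → ℝ) : Fin m₂ → ℝ :=
  fun j => (B j).mulVec x ⬝ᵥ ξ

/-- The step-2 group law `(x,t) ⋆ (ξ,τ) = (x + ξ, t + τ + ½⟨Bx,ξ⟩)`. -/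
noncomputable def gmul {m₁ m₂ : ℕ} (B : Fin m₂ → Matrix (Fin m₁) (Fin m₁) ℝ)
    (p q : (Fin m₁ → ℝ) × (Fin m₂ → ℝ)) : (Fin m₁ → ℝ) × (Fin m₂ → ℝ) :=
  (p.1 + q.1, p.2 + q.2 + (1 / 2 : ℝ) • bvec B p.1 q.1)

/-- Euclidean norm on `ℝ^n`. -/
noncomputable def eunorm {n : ℕ} (x : Fin n → ℝ) : ℝ :=
  Real.sqrt (∑ i, x i ^ 2)

/-- Component of `x` along the horizontal direction `e₁`: `x^∥ = x₁e₁`. -/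
noncomputable def xpar {m : ℕ} (x : Fin (m + 1) → ℝ) : Fin (m + 1) → ℝ :=
  Pi.single 0 (x 0)

/-- Orthogonal component `x^⊥ = x - x^∥`. -/
noncomputable def xperp {m : ℕ} (x : Fin (m + 1) → ℝ) : Fin (m + 1) → ℝ :=
  x - xpar x

/-- The positive open cone `C⁺(0,α)` with vertex `0` and aperture `α`:
`max{|x^⊥|, ε₂|t − ½⟨Bx^⊥, x^∥⟩|^{1/2}} < α|x₁|` with `x₁ > 0`. -/
noncomputable def posCone {m m₂ : ℕ}
    (B : Fin m₂ → Matrix (Fin (m + 1)) (Fin (m + 1)) ℝ) (ε₂ α : ℝ) :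
    Set ((Fin (m + 1) → ℝ) × (Fin m₂ → ℝ)) :=
  {p | max (eunorm (xperp p.1))
        (ε₂ * Real.sqrt (eunorm (p.2 - (1 / 2 : ℝ) • bvec B (xperp p.1) (xpar p.1))))
      < α * |p.1 0| ∧ 0 < p.1 0}


/-- The negative open cone `C⁻(0,α)`: same condition with `x₁ < 0`. -/
noncomputable def negCone {m m₂ : ℕ}
    (B : Fin m₂ → Matrix (Fin (m + 1)) (Fin (m + 1)) ℝ) (ε₂ α : ℝ) :
    Set ((Fin (m + 1) → ℝ) × (Fin m₂ → ℝ)) :=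
  {p | max (eunorm (xperp p.1))
        (ε₂ * Real.sqrt (eunorm (p.2 - (1 / 2 : ℝ) • bvec B (xperp p.1) (xpar p.1))))
      < α * |p.1 0| ∧ p.1 0 < 0}

variable {m₁ m₂ : ℕ} (B : Fin m₂ → Matrix (Fin m₁) (Fin m₁) ℝ)

lemma eunorm_eq_norm {n : ℕ} (x : Fin n → ℝ) :
    eunorm x = ‖(EuclideanSpace.equiv (Fin n) ℝ).symm x‖ := by
  simp [eunorm, EuclideanSpace.norm_eq, Real.norm_eq_abs, sq_abs]

lemma eunorm_nonneg {n : ℕ} (x : Fin n → ℝ) : 0 ≤ eunorm x := Real.sqrt_nonneg _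

lemma eunorm_add_le {n : ℕ} (x y : Fin n → ℝ) : eunorm (x + y) ≤ eunorm x + eunorm y := by
  simp only [eunorm_eq_norm, map_add]
  exact norm_add_le _ _

lemma eunorm_smul {n : ℕ} (c : ℝ) (x : Fin n → ℝ) : eunorm (c • x) = |c| * eunorm x := by
  simp only [eunorm_eq_norm, _root_.map_smul, norm_smul, Real.norm_eq_abs]

lemma eunorm_single {m : ℕ} (c : ℝ) : eunorm (Pi.single 0 c : Fin (m+1) → ℝ) = |c| := by
  simp [eunorm, Pi.single_apply, apply_ite (· ^ 2), Real.sqrt_sq_eq_abs]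


lemma bvec_add_left (x y ξ : Fin m₁ → ℝ) :
    bvec B (x + y) ξ = bvec B x ξ + bvec B y ξ := by
  funext j; simp [bvec, Matrix.mulVec_add, add_dotProduct]

lemma bvec_add_right (x ξ η : Fin m₁ → ℝ) :
    bvec B x (ξ + η) = bvec B x ξ + bvec B x η := by
  funext j; simp [bvec, dotProduct_add]

lemma bvec_skew (hB : ∀ j, (B j)ᵀ = -B j) (x ξ : Fin m₁ → ℝ) :
    bvec B x ξ = - bvec B ξ x := by
  funext j
  have h : (B j).mulVec x ⬝ᵥ ξ = ξ ⬝ᵥ (B j).mulVec x := dotProduct_comm _ _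
  have h2 : ξ ⬝ᵥ (B j).mulVec x = (B j).vecMul ξ ⬝ᵥ x := Matrix.dotProduct_mulVec _ _ _
  have h3 : (B j).vecMul ξ = ((B j)ᵀ).mulVec ξ := (Matrix.mulVec_transpose _ _).symm
  simp [bvec, h, h2, h3, hB j, Matrix.neg_mulVec, neg_dotProduct]

lemma bvec_par_par {m : ℕ} (B : Fin m₂ → Matrix (Fin (m+1)) (Fin (m+1)) ℝ)
    (hB : ∀ j, (B j)ᵀ = -B j) (x ξ : Fin (m+1) → ℝ) :
    bvec B (xpar x) (xpar ξ) = 0 := by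
  funext j
  have hd : B j 0 0 = 0 := by
    have := congrFun (congrFun (hB j) 0) 0
    simp [Matrix.transpose_apply] at this
    linarith
  simp [bvec, xpar, Matrix.mulVec_single, dotProduct_single, hd]

lemma xpar_add {m : ℕ} (x y : Fin (m+1) → ℝ) : xpar (x + y) = xpar x + xpar y := by
  simp [xpar, Pi.single_add]

lemma xperp_add {m : ℕ} (x y : Fin (m+1) → ℝ) : xperp (x + y) = xperp x + xperp y := by
  simp only [xperp, xpar_add]; abel

lemma xpar_add_xperp {m : ℕ} (x : Fin (m+1) → ℝ) : xpar x + xperp x = x := by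
  simp [xperp]

lemma eunorm_xpar {m : ℕ} (x : Fin (m+1) → ℝ) : eunorm (xpar x) = |x 0| :=
  eunorm_single (x 0)

lemma Tdecomp {m : ℕ} (B : Fin m₂ → Matrix (Fin (m+1)) (Fin (m+1)) ℝ)
    (hB : ∀ j, (B j)ᵀ = -B j) (x ξ : Fin (m+1) → ℝ) (s τ : Fin m₂ → ℝ) :
    (s + τ + (1/2:ℝ) • bvec B x ξ) - (1/2:ℝ) • bvec B (xperp (x+ξ)) (xpar (x+ξ)) =
      ((s - (1/2:ℝ) • bvec B (xperp x) (xpar x)) + (τ - (1/2:ℝ) • bvec B (xperp ξ) (xpar ξ))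
        + bvec B (xpar x) (xperp ξ)) + (1/2:ℝ) • bvec B (xperp x) (xperp ξ) := by
  have key : bvec B x ξ = bvec B (xpar x) (xperp ξ) + bvec B (xperp x) (xpar ξ)
      + bvec B (xperp x) (xperp ξ) := by
    conv_lhs => rw [← xpar_add_xperp x, ← xpar_add_xperp ξ]
    rw [bvec_add_left, bvec_add_right, bvec_add_right, bvec_par_par B hB]
    abel
  have key2 : bvec B (xperp (x+ξ)) (xpar (x+ξ)) =
      bvec B (xperp x) (xpar x) + bvec B (xperp x) (xpar ξ)
      + bvec B (xperp ξ) (xpar x) + bvec B (xperp ξ) (xpar ξ) := by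
    rw [xperp_add, xpar_add, bvec_add_left, bvec_add_right, bvec_add_right]
    abel
  have hsk : bvec B (xperp ξ) (xpar x) = - bvec B (xpar x) (xperp ξ) := bvec_skew B hB _ _
  rw [key, key2, hsk]
  module

set_option maxHeartbeats 1000000 in
lemma cone_est {m m₂ : ℕ} (B : Fin m₂ → Matrix (Fin (m+1)) (Fin (m+1)) ℝ)
    (hB : ∀ j, (B j)ᵀ = -B j) (ε₂ : ℝ) (hε₂ : 0 < ε₂) (C : ℝ) (hC : 0 < C)
    (hCB : ∀ x ξ : Fin (m+1) → ℝ, eunorm (bvec B x ξ) ≤ C * eunorm x * eunorm ξ)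
    (α β γ : ℝ) (hα : 0 ≤ α) (hβ : 0 ≤ β)
    (hγ : γ = max (max α β) (ε₂ / 2 * Real.sqrt ((α * β + 2 * β) * C)))
    (x ξ : Fin (m+1) → ℝ) (s τ : Fin m₂ → ℝ)
    (hx : max (eunorm (xperp x))
      (ε₂ * Real.sqrt (eunorm (s - (1/2:ℝ) • bvec B (xperp x) (xpar x)))) < α * |x 0|)
    (hxi : max (eunorm (xperp ξ))
      (ε₂ * Real.sqrt (eunorm (τ - (1/2:ℝ) • bvec B (xperp ξ) (xpar ξ)))) < β * |ξ 0|)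
    (habs : |x 0 + ξ 0| = |x 0| + |ξ 0|) :
    max (eunorm (xperp (x+ξ)))
      (ε₂ * Real.sqrt (eunorm ((s + τ + (1/2:ℝ) • bvec B x ξ)
        - (1/2:ℝ) • bvec B (xperp (x+ξ)) (xpar (x+ξ))))) < γ * |x 0 + ξ 0| := by
  obtain ⟨h1, h2⟩ := max_lt_iff.mp hx
  obtain ⟨h3, h4⟩ := max_lt_iff.mp hxi
  have hX0 : 0 ≤ |x 0| := abs_nonneg _
  have hY0 : 0 ≤ |ξ 0| := abs_nonneg _
  have hαX : 0 < α * |x 0| := lt_of_le_of_lt (eunorm_nonneg _) h1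
  have hβY : 0 < β * |ξ 0| := lt_of_le_of_lt (eunorm_nonneg _) h3
  have hXpos : 0 < |x 0| := by nlinarith
  have hYpos : 0 < |ξ 0| := by nlinarith
  have hαpos : 0 < α := by nlinarith
  have hβpos : 0 < β := by nlinarith
  have hγα : α ≤ γ := hγ ▸ le_trans (le_max_left α β) (le_max_left _ _)
  have hγβ : β ≤ γ := hγ ▸ le_trans (le_max_right α β) (le_max_left _ _)
  have hγpos : 0 < γ := lt_of_lt_of_le hαpos hγα
  have hsq : ε₂^2 * ((α*β + 2*β)*C) ≤ 4 * γ^2 := by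
    have hnn : 0 ≤ (α*β + 2*β)*C := by positivity
    have hG : ε₂/2 * Real.sqrt ((α*β + 2*β)*C) ≤ γ := hγ ▸ le_max_right _ _
    have hGnn : 0 ≤ ε₂/2 * Real.sqrt ((α*β+2*β)*C) := by positivity
    have h5 := mul_self_le_mul_self hGnn hG
    have hs := Real.sq_sqrt hnn
    nlinarith [h5, hs]
  rw [habs]
  set S := s - (1/2:ℝ) • bvec B (xperp x) (xpar x) with hS
  set Tc := τ - (1/2:ℝ) • bvec B (xperp ξ) (xpar ξ) with hTc
  have ha : eunorm (xperp (x+ξ)) < γ * (|x 0| + |ξ 0|) := by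
    rw [xperp_add]
    calc eunorm (xperp x + xperp ξ) ≤ eunorm (xperp x) + eunorm (xperp ξ) := eunorm_add_le _ _
    _ < α * |x 0| + β * |ξ 0| := by linarith
    _ ≤ γ * (|x 0| + |ξ 0|) := by nlinarith
  refine max_lt ha ?_
  have eS : ε₂^2 * eunorm S < (α * |x 0|)^2 := by
    have h5 := mul_self_lt_mul_self (by positivity) h2
    nlinarith [Real.mul_self_sqrt (eunorm_nonneg S)]
  have eTc : ε₂^2 * eunorm Tc < (β * |ξ 0|)^2 := by
    have h5 := mul_self_lt_mul_self (by positivity) h4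
    nlinarith [Real.mul_self_sqrt (eunorm_nonneg Tc)]
  have hP2 : eunorm (bvec B (xpar x) (xperp ξ)) ≤ C * |x 0| * (β * |ξ 0|) := by
    have h5 := hCB (xpar x) (xperp ξ)
    rw [eunorm_xpar] at h5
    have h6 : C * |x 0| * eunorm (xperp ξ) ≤ C * |x 0| * (β * |ξ 0|) :=
      mul_le_mul_of_nonneg_left h3.le (by positivity)
    linarith
  have hQ2 : eunorm (bvec B (xperp x) (xperp ξ)) ≤ C * (α * |x 0|) * (β * |ξ 0|) := by
    have h5 := hCB (xperp x) (xperp ξ)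
    have h6 : C * eunorm (xperp x) * eunorm (xperp ξ) ≤ C * (α * |x 0|) * (β * |ξ 0|) :=
      mul_le_mul (mul_le_mul_of_nonneg_left h1.le hC.le) h3.le (eunorm_nonneg _) (by positivity)
    linarith
  have hTle : eunorm ((s + τ + (1/2:ℝ) • bvec B x ξ)
      - (1/2:ℝ) • bvec B (xperp (x+ξ)) (xpar (x+ξ)))
      ≤ eunorm S + eunorm Tc + eunorm (bvec B (xpar x) (xperp ξ))
        + (1/2) * eunorm (bvec B (xperp x) (xperp ξ)) := by
    rw [Tdecomp B hB x ξ s τ, ← hS, ← hTc]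
    calc eunorm ((S + Tc + bvec B (xpar x) (xperp ξ)) + (1/2:ℝ) • bvec B (xperp x) (xperp ξ))
        ≤ eunorm (S + Tc + bvec B (xpar x) (xperp ξ))
          + eunorm ((1/2:ℝ) • bvec B (xperp x) (xperp ξ)) := eunorm_add_le _ _
      _ ≤ (eunorm (S + Tc) + eunorm (bvec B (xpar x) (xperp ξ)))
          + eunorm ((1/2:ℝ) • bvec B (xperp x) (xperp ξ)) := by
            have := eunorm_add_le (S + Tc) (bvec B (xpar x) (xperp ξ))
            linarith
      _ ≤ _ := by
            have := eunorm_add_le S Tc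
            rw [eunorm_smul]
            rw [show |(1/2 : ℝ)| = 1/2 by norm_num]
            linarith
  have hRpos : 0 < γ * (|x 0| + |ξ 0|) := by positivity
  have key : ε₂^2 * eunorm ((s + τ + (1/2:ℝ) • bvec B x ξ)
      - (1/2:ℝ) • bvec B (xperp (x+ξ)) (xpar (x+ξ))) < (γ * (|x 0| + |ξ 0|))^2 := by
    have hE := mul_le_mul_of_nonneg_left hTle (le_of_lt (by positivity : (0:ℝ) < ε₂^2))
    have hP3 := mul_le_mul_of_nonneg_left hP2 (le_of_lt (by positivity : (0:ℝ) < ε₂^2))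
    have hQ3 := mul_le_mul_of_nonneg_left hQ2 (le_of_lt (by positivity : (0:ℝ) < ε₂^2))
    have hXY : ε₂^2 * ((α*β + 2*β)*C) * (|x 0| * |ξ 0|) ≤ 4 * γ^2 * (|x 0| * |ξ 0|) :=
      mul_le_mul_of_nonneg_right hsq (by positivity)
    have hA : α^2 * |x 0|^2 ≤ γ^2 * |x 0|^2 :=
      mul_le_mul_of_nonneg_right (pow_le_pow_left₀ hα hγα 2) (sq_nonneg _)
    have hBq : β^2 * |ξ 0|^2 ≤ γ^2 * |ξ 0|^2 :=
      mul_le_mul_of_nonneg_right (pow_le_pow_left₀ hβ hγβ 2) (sq_nonneg _)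
    nlinarith [hE, hP3, hQ3, hXY, hA, hBq, eS, eTc]
  have hnn : 0 ≤ ε₂ * Real.sqrt (eunorm ((s + τ + (1/2:ℝ) • bvec B x ξ)
      - (1/2:ℝ) • bvec B (xperp (x+ξ)) (xpar (x+ξ)))) := by positivity
  refine lt_of_pow_lt_pow_left₀ 2 (le_of_lt hRpos) ?_
  calc (ε₂ * Real.sqrt (eunorm ((s + τ + (1/2:ℝ) • bvec B x ξ)
      - (1/2:ℝ) • bvec B (xperp (x+ξ)) (xpar (x+ξ)))))^2
      = ε₂^2 * eunorm ((s + τ + (1/2:ℝ) • bvec B x ξ)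
        - (1/2:ℝ) • bvec B (xperp (x+ξ)) (xpar (x+ξ))) := by
        rw [mul_pow, Real.sq_sqrt (eunorm_nonneg _)]
    _ < (γ * (|x 0| + |ξ 0|))^2 := key

set_option maxHeartbeats 1000000 in
/-- If `p ∈ C⁺(0,α)` and `q ∈ C⁺(p,β) = p ⋆ C⁺(0,β)` (with `α, β ≥ 0`), then
`q ∈ C⁺(0,γ)` for `γ = max{α, β, (ε₂/2)√((αβ+2β)C)}`; the analogous statement
holds for negative cones. -/
theorem stmt_15 (m m₂ : ℕ) (B : Fin m₂ → Matrix (Fin (m + 1)) (Fin (m + 1)) ℝ)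
    (hB : ∀ j, (B j)ᵀ = -B j) (ε₂ : ℝ) (hε₂ : 0 < ε₂)
    (C : ℝ) (hC : 0 < C)
    (hCB : ∀ x ξ : Fin (m + 1) → ℝ, eunorm (bvec B x ξ) ≤ C * eunorm x * eunorm ξ)
    (α β : ℝ) (hα : 0 ≤ α) (hβ : 0 ≤ β)
    (γ : ℝ) (hγ : γ = max (max α β) (ε₂ / 2 * Real.sqrt ((α * β + 2 * β) * C)))
    (p q : (Fin (m + 1) → ℝ) × (Fin m₂ → ℝ)) :
    (p ∈ posCone B ε₂ α → q ∈ (fun c => gmul B p c) '' posCone B ε₂ β →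
        q ∈ posCone B ε₂ γ) ∧
    (p ∈ negCone B ε₂ α → q ∈ (fun c => gmul B p c) '' negCone B ε₂ β →
        q ∈ negCone B ε₂ γ) := by
  constructor
  · rintro ⟨hpmax, hp0⟩ ⟨c, ⟨hcmax, hc0⟩, rfl⟩
    have habs : |p.1 0 + c.1 0| = |p.1 0| + |c.1 0| := by
      rw [abs_of_pos hp0, abs_of_pos hc0, abs_of_pos (add_pos hp0 hc0)]
    have hest := cone_est B hB ε₂ hε₂ C hC hCB α β γ hα hβ hγ p.1 c.1 p.2 c.2 hpmax hcmax habs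
    refine ⟨?_, ?_⟩
    · show max (eunorm (xperp (p.1 + c.1)))
        (ε₂ * Real.sqrt (eunorm ((p.2 + c.2 + (1/2:ℝ) • bvec B p.1 c.1)
          - (1/2:ℝ) • bvec B (xperp (p.1 + c.1)) (xpar (p.1 + c.1))))) < γ * |(p.1 + c.1) 0|
      simpa using hest
    · exact add_pos hp0 hc0
  · rintro ⟨hpmax, hp0⟩ ⟨c, ⟨hcmax, hc0⟩, rfl⟩
    have hsum : p.1 0 + c.1 0 < 0 := by linarith
    have habs : |p.1 0 + c.1 0| = |p.1 0| + |c.1 0| := by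
      rw [abs_of_neg hp0, abs_of_neg hc0, abs_of_neg hsum]; ring
    have hest := cone_est B hB ε₂ hε₂ C hC hCB α β γ hα hβ hγ p.1 c.1 p.2 c.2 hpmax hcmax habs
    refine ⟨?_, ?_⟩
    · show max (eunorm (xperp (p.1 + c.1)))
        (ε₂ * Real.sqrt (eunorm ((p.2 + c.2 + (1/2:ℝ) • bvec B p.1 c.1)
          - (1/2:ℝ) • bvec B (xperp (p.1 + c.1)) (xpar (p.1 + c.1))))) < γ * |(p.1 + c.1) 0|
      simpa using hest
    · exact hsum
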